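/- arXiv:math/0406287 — 3 statements merged into one kernel-verified Lean document; each statement's English description precedes it below -/
import Mathlib

section
/- Let a ∈ ℂ with a ≠ 0, and consider the entire curve f : ℂ → ℂ* × ℂ* given by f(z) = (exp(az), exp(z²)), regarded as a map into the product (ℂ ∪ {∞}) × (ℂ ∪ {∞}) of two Riemann spheres. Then the limit set f(∞) contains {0, ∞} × (ℂ ∪ {∞}); that is, for every point p of {0, ∞} × (ℂ ∪ {∞}) there exists a sequence (zₙ) in ℂ with |zₙ| → ∞ and f(zₙ) → p. -/
open Filter Complex

set_option linter.unnecessarySimpa false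

private lemma tendsto_onePoint_coe {g : ℕ → ℂ} {c : ℂ} (h : Tendsto g atTop (nhds c)) :
    Tendsto (fun n => ((g n : OnePoint ℂ))) atTop (nhds ((c : OnePoint ℂ))) :=
  (OnePoint.continuous_coe.tendsto c).comp h

private lemma tendsto_onePoint_infty {g : ℕ → ℂ}
    (h : Tendsto (fun n => ‖g n‖) atTop atTop) :
    Tendsto (fun n => ((g n : OnePoint ℂ))) atTop (nhds (OnePoint.infty : OnePoint ℂ)) := by
  refine OnePoint.tendsto_coe_infty.comp ?_
  rw [Filter.coclosedCompact_eq_cocompact, ← Metric.cobounded_eq_cocompact,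
    ← tendsto_norm_atTop_iff_cobounded]
  simpa using h

private lemma arg_tendsto_aux {w : ℕ → ℂ} {r : ℕ → ℝ} {l : ℂ} (hl : l.im ≠ 0)
    (hr : ∀ n, 0 < r n)
    (h : Tendsto (fun n => (r n : ℂ) * w n) atTop (nhds l)) :
    Tendsto (fun n => (w n).arg) atTop (nhds l.arg) := by
  have hcont : ContinuousAt Complex.arg l := Complex.continuousAt_arg (Or.inr hl)
  have h2 : (fun n => (w n).arg) = fun n => ((r n : ℂ) * w n).arg := by
    funext n; exact (Complex.arg_real_mul (w n) (hr n)).symm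
  rw [h2]
  exact hcont.tendsto.comp h

private lemma key {a d : ℂ} (w : ℕ → ℂ) (hw0 : ∀ n, w n ≠ 0)
    (habs : Tendsto (fun n => ‖w n‖) atTop atTop)
    (harg : Tendsto (fun n => Complex.exp ((((w n).arg / 2 : ℝ) : ℂ) * I)) atTop (nhds d))
    (hpos : 0 < (a * d).re) :
    ∃ z : ℕ → ℂ, (∀ n, z n ^ 2 = w n) ∧
      Tendsto (fun n => ‖z n‖) atTop atTop ∧
      Tendsto (fun n => (a * z n).re) atTop atTop := by
  set x : ℕ → ℝ := fun n => Real.log (‖w n‖) / 2 with hx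
  set z : ℕ → ℂ := fun n => Complex.exp ((x n : ℂ) + (((w n).arg / 2 : ℝ) : ℂ) * I) with hz
  have hxt : Tendsto x atTop atTop := by
    apply Tendsto.atTop_div_const (by norm_num : (0:ℝ) < 2)
    exact Real.tendsto_log_atTop.comp habs
  have hzsq : ∀ n, z n ^ 2 = w n := by
    intro n
    have : z n ^ 2 = Complex.exp (((x n : ℂ) + (((w n).arg / 2 : ℝ) : ℂ) * I) +
        ((x n : ℂ) + (((w n).arg / 2 : ℝ) : ℂ) * I)) := by
      rw [Complex.exp_add]; ring
    rw [this]
    have harg2 : ((x n : ℂ) + (((w n).arg / 2 : ℝ) : ℂ) * I) +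
        ((x n : ℂ) + (((w n).arg / 2 : ℝ) : ℂ) * I) = Complex.log (w n) := by
      have h1 : Complex.log (w n) = ((Complex.log (w n)).re : ℂ) +
          ((Complex.log (w n)).im : ℂ) * I := (Complex.re_add_im _).symm
      rw [h1, Complex.log_re, Complex.log_im, hx]
      push_cast
      ring
    rw [harg2, Complex.exp_log (hw0 n)]
  have hzabs : ∀ n, ‖z n‖ = Real.exp (x n) := by
    intro n
    rw [hz, Complex.norm_exp]
    congr 1
    simp
  refine ⟨z, hzsq, ?_, ?_⟩
  · simp only [hzabs]
    exact Real.tendsto_exp_atTop.comp hxt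
  · have hsplit : ∀ n, (a * z n).re =
        (a * Complex.exp ((((w n).arg / 2 : ℝ) : ℂ) * I)).re * Real.exp (x n) := by
      intro n
      show (a * Complex.exp ((x n : ℂ) + (((w n).arg / 2 : ℝ) : ℂ) * I)).re = _
      rw [Complex.exp_add]
      have : a * (Complex.exp (x n : ℂ) * Complex.exp ((((w n).arg / 2 : ℝ) : ℂ) * I)) =
          ((Real.exp (x n) : ℝ) : ℂ) * (a * Complex.exp ((((w n).arg / 2 : ℝ) : ℂ) * I)) := by
        rw [Complex.ofReal_exp]; ring
      rw [this, Complex.re_ofReal_mul]; ring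
    simp only [hsplit]
    refine Filter.Tendsto.pos_mul_atTop hpos ?_ (Real.tendsto_exp_atTop.comp hxt)
    have hc : Continuous fun u : ℂ => (a * u).re :=
      Complex.continuous_re.comp (continuous_const.mul continuous_id)
    exact (hc.tendsto d).comp harg

private lemma key_pos {a d : ℂ} (hd : (a * d).re ≠ 0) (w : ℕ → ℂ) (hw0 : ∀ n, w n ≠ 0)
    (habs : Tendsto (fun n => ‖w n‖) atTop atTop)
    (harg : Tendsto (fun n => Complex.exp ((((w n).arg / 2 : ℝ) : ℂ) * I)) atTop (nhds d)) :
    ∃ z : ℕ → ℂ, (∀ n, z n ^ 2 = w n) ∧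
      Tendsto (fun n => ‖z n‖) atTop atTop ∧
      Tendsto (fun n => (a * z n).re) atTop atTop := by
  rcases hd.lt_or_gt with h | h
  · obtain ⟨z, h1, h2, h3⟩ := key (a := -a) w hw0 habs harg (by rw [show (-a)*d = -(a*d) by ring, Complex.neg_re]; linarith)
    refine ⟨fun n => -(z n), fun n => by rw [neg_pow]; simpa using h1 n, by simpa using h2, ?_⟩
    have he : ∀ n, a * -(z n) = -a * z n := fun n => by ring
    simp only [he]
    exact h3
  · exact key w hw0 habs harg h

private lemma key_neg {a d : ℂ} (hd : (a * d).re ≠ 0) (w : ℕ → ℂ) (hw0 : ∀ n, w n ≠ 0)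
    (habs : Tendsto (fun n => ‖w n‖) atTop atTop)
    (harg : Tendsto (fun n => Complex.exp ((((w n).arg / 2 : ℝ) : ℂ) * I)) atTop (nhds d)) :
    ∃ z : ℕ → ℂ, (∀ n, z n ^ 2 = w n) ∧
      Tendsto (fun n => ‖z n‖) atTop atTop ∧
      Tendsto (fun n => (a * z n).re) atTop atBot := by
  obtain ⟨z, h1, h2, h3⟩ := key_pos (a := -a) (by rw [show (-a)*d = -(a*d) by ring, Complex.neg_re]; exact neg_ne_zero.mpr hd) w hw0 habs harg
  refine ⟨z, h1, h2, ?_⟩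
  have he : ∀ n, (a * z n).re = -((-a * z n).re) := fun n => by
    simp [neg_mul]
  simp only [he]
  exact tendsto_neg_atTop_atBot.comp h3

private lemma harg_of {σ : ℝ} (hσ : σ = 1 ∨ σ = -1) (w : ℕ → ℂ) (r : ℕ → ℝ)
    (hr : ∀ n, 0 < r n)
    (h : Tendsto (fun n => (r n : ℂ) * w n) atTop (nhds ((σ : ℂ) * I))) :
    Tendsto (fun n => Complex.exp ((((w n).arg / 2 : ℝ) : ℂ) * I)) atTop
      (nhds (Complex.exp (((σ * (Real.pi / 4) : ℝ) : ℂ) * I))) := by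
  have him : ((σ : ℂ) * I).im = σ := by simp
  have hσ0 : σ ≠ 0 := by rcases hσ with h' | h' <;> rw [h'] <;> norm_num
  have harg : Tendsto (fun n => (w n).arg) atTop (nhds (σ * (Real.pi / 2))) := by
    have := arg_tendsto_aux (by rw [him]; exact hσ0) hr h
    have hval : ((σ : ℂ) * I).arg = σ * (Real.pi / 2) := by
      rcases hσ with h' | h' <;> subst h'
      · simpa using Complex.arg_I
      · push_cast
        rw [show (-1 : ℂ) * I = -I by ring, Complex.arg_neg_I]
        ring
    rwa [hval] at this
  have hcont : Continuous fun t : ℝ => Complex.exp (((t / 2 : ℝ) : ℂ) * I) := by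
    continuity
  have := (hcont.tendsto (σ * (Real.pi / 2))).comp harg
  convert this using 2
  · rfl
  congr 1
  push_cast
  ring

private lemma sigma_exists {a : ℂ} (ha : a ≠ 0) :
    ∃ σ : ℝ, (σ = 1 ∨ σ = -1) ∧
      (a * Complex.exp (((σ * (Real.pi / 4) : ℝ) : ℂ) * I)).re ≠ 0 := by
  by_contra h
  push_neg at h
  have h1 := h 1 (Or.inl rfl)
  have h2 := h (-1) (Or.inr rfl)
  have e1 : (a * Complex.exp (((1 * (Real.pi / 4) : ℝ) : ℂ) * I)).re =
      a.re * Real.cos (Real.pi / 4) - a.im * Real.sin (Real.pi / 4) := by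
    rw [Complex.mul_re, Complex.exp_ofReal_mul_I_re, Complex.exp_ofReal_mul_I_im]
    norm_num
  have e2 : (a * Complex.exp ((((-1) * (Real.pi / 4) : ℝ) : ℂ) * I)).re =
      a.re * Real.cos (Real.pi / 4) + a.im * Real.sin (Real.pi / 4) := by
    rw [Complex.mul_re, Complex.exp_ofReal_mul_I_re, Complex.exp_ofReal_mul_I_im]
    rw [show (-1 : ℝ) * (Real.pi / 4) = -(Real.pi / 4) by ring, Real.cos_neg, Real.sin_neg]
    ring
  rw [e1] at h1
  rw [e2] at h2
  have hc : Real.cos (Real.pi / 4) = Real.sqrt 2 / 2 := Real.cos_pi_div_four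
  have hs : Real.sin (Real.pi / 4) = Real.sqrt 2 / 2 := Real.sin_pi_div_four
  have hpos : (0 : ℝ) < Real.sqrt 2 / 2 := by positivity
  rw [hc, hs] at h1 h2
  have hre : a.re = 0 := by nlinarith
  have him : a.im = 0 := by nlinarith
  exact ha (Complex.ext hre him)

private lemma tendsto_nat_add_one : Tendsto (fun n : ℕ => (n : ℝ) + 1) atTop atTop :=
  tendsto_atTop_add_const_right atTop 1 tendsto_natCast_atTop_atTop

private lemma tendsto_inv_nat_add_one_complex :
    Tendsto (fun n : ℕ => (((n : ℝ) + 1 : ℝ) : ℂ)⁻¹) atTop (nhds 0) := by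
  have h : Tendsto (fun n : ℕ => ((n : ℝ) + 1)⁻¹) atTop (nhds 0) :=
    tendsto_inv_atTop_zero.comp tendsto_nat_add_one
  have := (Complex.continuous_ofReal.tendsto 0).comp h
  simpa [Function.comp_def, Complex.ofReal_inv] using this

private lemma w_pm {σ : ℝ} (hσ : σ = 1 ∨ σ = -1) (s : ℝ) :
    ∃ w : ℕ → ℂ, (∀ n, w n ≠ 0) ∧
      Tendsto (fun n => ‖w n‖) atTop atTop ∧
      Tendsto (fun n => Complex.exp ((((w n).arg / 2 : ℝ) : ℂ) * I)) atTop
        (nhds (Complex.exp (((σ * (Real.pi / 4) : ℝ) : ℂ) * I))) ∧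
      (∀ n, (w n).re = s * ((n : ℝ) + 1)) := by
  have hσ0 : σ ≠ 0 := by rcases hσ with h' | h' <;> rw [h'] <;> norm_num
  set w : ℕ → ℂ := fun n =>
    ((s * ((n : ℝ) + 1) : ℝ) : ℂ) + ((σ * ((n : ℝ) + 1) ^ 2 : ℝ) : ℂ) * I with hw
  have hre : ∀ n, (w n).re = s * ((n : ℝ) + 1) := by
    intro n
    simp only [hw, Complex.add_re, Complex.mul_re, Complex.ofReal_re, Complex.ofReal_im,
      Complex.I_re, Complex.I_im]
    ring
  have him : ∀ n, (w n).im = σ * ((n : ℝ) + 1) ^ 2 := by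
    intro n
    simp only [hw, Complex.add_im, Complex.mul_im, Complex.ofReal_re, Complex.ofReal_im,
      Complex.I_re, Complex.I_im]
    ring
  have hn1 : ∀ n : ℕ, (0 : ℝ) < (n : ℝ) + 1 := fun n => by positivity
  have hw0 : ∀ n, w n ≠ 0 := by
    intro n h
    have h2 := congrArg Complex.im h
    rw [him] at h2
    simp only [Complex.zero_im, mul_eq_zero] at h2
    rcases h2 with h' | h'
    · exact hσ0 h'
    · nlinarith [hn1 n]
  have habs : Tendsto (fun n => ‖w n‖) atTop atTop := by
    refine tendsto_atTop_mono (fun n => ?_) tendsto_nat_add_one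
    calc (n : ℝ) + 1 ≤ ((n : ℝ) + 1) ^ 2 := by nlinarith [hn1 n]
      _ ≤ |(w n).im| := by
          rw [him]
          rcases hσ with h' | h' <;> rw [h']
          · simpa using le_abs_self _
          · rw [show (-1 : ℝ) * ((n:ℝ)+1)^2 = -(((n:ℝ)+1)^2) by ring]
            simpa using neg_le_abs _
      _ ≤ ‖w n‖ := Complex.abs_im_le_norm _
  refine ⟨w, hw0, habs, ?_, hre⟩
  refine harg_of hσ w (fun n => (((n : ℝ) + 1) ^ 2)⁻¹) (fun n => by positivity) ?_
  have heq : ∀ n : ℕ, (((((n : ℝ) + 1) ^ 2)⁻¹ : ℝ) : ℂ) * w n =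
      ((s : ℂ)) * (((n : ℂ) + 1))⁻¹ + (σ : ℂ) * I := by
    intro n
    have hne : ((n : ℂ) + 1) ≠ 0 := by
      have h0 := Complex.ofReal_ne_zero.mpr (hn1 n).ne'
      push_cast at h0
      exact h0
    rw [hw]
    push_cast
    field_simp
  simp only [heq]
  have h1 : Tendsto (fun n : ℕ => ((s : ℂ)) * (((n : ℂ) + 1))⁻¹) atTop (nhds 0) := by
    have h2 : Tendsto (fun n : ℕ => (((n : ℂ) + 1))⁻¹) atTop (nhds 0) := by
      have := tendsto_inv_nat_add_one_complex
      simpa [Complex.ofReal_add] using this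
    simpa using h2.const_mul (s : ℂ)
  simpa using h1.add_const ((σ : ℂ) * I)

private lemma w_log {σ : ℝ} (hσ : σ = 1 ∨ σ = -1) {c : ℂ} (hc : c ≠ 0) :
    ∃ w : ℕ → ℂ, (∀ n, w n ≠ 0) ∧
      Tendsto (fun n => ‖w n‖) atTop atTop ∧
      Tendsto (fun n => Complex.exp ((((w n).arg / 2 : ℝ) : ℂ) * I)) atTop
        (nhds (Complex.exp (((σ * (Real.pi / 4) : ℝ) : ℂ) * I))) ∧
      (∀ n, Complex.exp (w n) = c) := by
  have hπ := Real.pi_gt_three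
  set w : ℕ → ℂ := fun n =>
    Complex.log c + ((σ * (2 * Real.pi * ((n : ℝ) + 1)) : ℝ) : ℂ) * I with hw
  have him : ∀ n, (w n).im = Complex.arg c + σ * (2 * Real.pi * ((n : ℝ) + 1)) := by
    intro n
    simp only [hw, Complex.add_im, Complex.mul_im, Complex.ofReal_re, Complex.ofReal_im,
      Complex.I_re, Complex.I_im, Complex.log_im]
    ring
  have hargc := Complex.abs_arg_le_pi c
  rw [abs_le] at hargc
  have hn0 : ∀ n : ℕ, (0 : ℝ) ≤ (n : ℝ) := fun n => n.cast_nonneg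
  have hbound : ∀ n : ℕ, (n : ℝ) + 1 ≤ |(w n).im| := by
    intro n
    rw [him]
    rcases hσ with h' | h' <;> rw [h']
    · refine le_trans ?_ (le_abs_self _)
      nlinarith [hn0 n]
    · refine le_trans ?_ (neg_le_abs _)
      nlinarith [hn0 n]
  have hw0 : ∀ n, w n ≠ 0 := by
    intro n h
    have h2 := congrArg Complex.im h
    rw [Complex.zero_im] at h2
    have := hbound n
    rw [h2] at this
    simp at this
    nlinarith [hn0 n]
  have habs : Tendsto (fun n => ‖w n‖) atTop atTop := by
    refine tendsto_atTop_mono (fun n => ?_) tendsto_nat_add_one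
    exact le_trans (hbound n) (Complex.abs_im_le_norm _)
  have hrpos : ∀ n : ℕ, (0 : ℝ) < (2 * Real.pi * ((n : ℝ) + 1))⁻¹ := by
    intro n
    have : (0:ℝ) < 2 * Real.pi * ((n : ℝ) + 1) := by positivity
    positivity
  refine ⟨w, hw0, habs, ?_, ?_⟩
  · refine harg_of hσ w (fun n => (2 * Real.pi * ((n : ℝ) + 1))⁻¹) hrpos ?_
    have heq : ∀ n : ℕ, (((2 * Real.pi * ((n : ℝ) + 1))⁻¹ : ℝ) : ℂ) * w n =
        (((2 * Real.pi * ((n : ℝ) + 1))⁻¹ : ℝ) : ℂ) * Complex.log c + (σ : ℂ) * I := by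
      intro n
      have hne : (2 * Real.pi * ((n : ℝ) + 1)) ≠ 0 := by positivity
      have hnec : (((2 * Real.pi * ((n : ℝ) + 1)) : ℝ) : ℂ) ≠ 0 := Complex.ofReal_ne_zero.mpr hne
      rw [hw]
      have hcan : (((2 * Real.pi * ((n : ℝ) + 1)) : ℝ) : ℂ)⁻¹ *
          (((2 * Real.pi * ((n : ℝ) + 1)) : ℝ) : ℂ) = 1 := inv_mul_cancel₀ hnec
      push_cast at hcan ⊢
      linear_combination ((σ : ℂ) * I) * hcan
    simp only [heq]
    have h1 : Tendsto (fun n : ℕ => (((2 * Real.pi * ((n : ℝ) + 1))⁻¹ : ℝ) : ℂ)) atTop (nhds 0) := by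
      have h2 : Tendsto (fun n : ℕ => (2 * Real.pi * ((n : ℝ) + 1))⁻¹) atTop (nhds 0) := by
        refine tendsto_inv_atTop_zero.comp ?_
        exact (tendsto_nat_add_one.const_mul_atTop (by positivity : (0:ℝ) < 2 * Real.pi))
      have := (Complex.continuous_ofReal.tendsto 0).comp h2
      simpa [Function.comp_def] using this
    simpa using (h1.mul_const (Complex.log c)).add_const ((σ : ℂ) * I)
  · intro n
    rw [hw]
    rw [Complex.exp_add, Complex.exp_log hc]
    rcases hσ with h' | h' <;> rw [h']
    · have : ((((1:ℝ) * (2 * Real.pi * ((n : ℝ) + 1))) : ℝ) : ℂ) * I =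
          (((n : ℕ) + 1 : ℤ) : ℂ) * (2 * (Real.pi : ℂ) * I) := by push_cast; ring
      rw [this, Complex.exp_int_mul_two_pi_mul_I, mul_one]
    · have : ((((-1:ℝ) * (2 * Real.pi * ((n : ℝ) + 1))) : ℝ) : ℂ) * I =
          ((-((n : ℕ) + 1) : ℤ) : ℂ) * (2 * (Real.pi : ℂ) * I) := by push_cast; ring
      rw [this, Complex.exp_int_mul_two_pi_mul_I, mul_one]


/-- For `f : ℂ → (ℂ ∪ {∞}) × (ℂ ∪ {∞})`, `f z = (exp (a z), exp (z²))` with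
`a ≠ 0`, the limit set `f(∞)` contains `{0, ∞} × (ℂ ∪ {∞})`: every point `p` with first
coordinate `0` or `∞` is the limit of `f (zₙ)` for some sequence `zₙ` with `|zₙ| → ∞`. -/
theorem limit_set_contains_fiber (a : ℂ) (ha : a ≠ 0)
    (f : ℂ → OnePoint ℂ × OnePoint ℂ)
    (hf : ∀ z : ℂ, f z =
      (((Complex.exp (a * z) : ℂ) : OnePoint ℂ), ((Complex.exp (z ^ 2) : ℂ) : OnePoint ℂ))) :
    ∀ p : OnePoint ℂ × OnePoint ℂ,
      (p.1 = ((0 : ℂ) : OnePoint ℂ) ∨ p.1 = OnePoint.infty) →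
      ∃ z : ℕ → ℂ,
        Tendsto (fun n => ‖z n‖) atTop atTop ∧
        Tendsto (fun n => f (z n)) atTop (nhds p) := by
  intro p hp1
  obtain ⟨σ, hσ, hd⟩ := sigma_exists ha
  obtain ⟨p1, p2⟩ := p
  dsimp only at hp1 ⊢
  obtain ⟨w, hw0, habs, harg, hsec⟩ :
      ∃ w : ℕ → ℂ, (∀ n, w n ≠ 0) ∧
        Tendsto (fun n => ‖w n‖) atTop atTop ∧
        Tendsto (fun n => Complex.exp ((((w n).arg / 2 : ℝ) : ℂ) * I)) atTop
          (nhds (Complex.exp (((σ * (Real.pi / 4) : ℝ) : ℂ) * I))) ∧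
        Tendsto (fun n => ((Complex.exp (w n) : ℂ) : OnePoint ℂ)) atTop (nhds p2) := by
    cases p2 with
    | infty =>
      obtain ⟨w, h0, h1, h2, hre⟩ := w_pm hσ 1
      refine ⟨w, h0, h1, h2, ?_⟩
      apply tendsto_onePoint_infty
      have he : ∀ n, ‖Complex.exp (w n)‖ = Real.exp ((n : ℝ) + 1) := by
        intro n; rw [Complex.norm_exp, hre n, one_mul]
      simp only [he]
      exact Real.tendsto_exp_atTop.comp tendsto_nat_add_one
    | coe c =>
      by_cases hc : c = 0
      · subst hc
        obtain ⟨w, h0, h1, h2, hre⟩ := w_pm hσ (-1)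
        refine ⟨w, h0, h1, h2, ?_⟩
        apply tendsto_onePoint_coe
        rw [tendsto_zero_iff_norm_tendsto_zero]
        have he : ∀ n, ‖Complex.exp (w n)‖ = Real.exp (-((n : ℝ) + 1)) := by
          intro n; rw [Complex.norm_exp, hre n]; ring_nf
        simp only [he]
        exact Real.tendsto_exp_atBot.comp (tendsto_neg_atTop_atBot.comp tendsto_nat_add_one)
      · obtain ⟨w, h0, h1, h2, hexp⟩ := w_log hσ hc
        refine ⟨w, h0, h1, h2, ?_⟩
        simp only [hexp]
        exact tendsto_const_nhds
  rcases hp1 with hp1 | hp1 <;> subst hp1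
  · obtain ⟨z, hsq, hzabs, hre⟩ := key_neg hd w hw0 habs harg
    refine ⟨z, hzabs, ?_⟩
    simp only [hf]
    refine Tendsto.prodMk_nhds ?_ ?_
    · apply tendsto_onePoint_coe
      rw [tendsto_zero_iff_norm_tendsto_zero]
      have he : ∀ n, ‖Complex.exp (a * z n)‖ = Real.exp ((a * z n).re) := by
        intro n; rw [Complex.norm_exp]
      simp only [he]
      exact Real.tendsto_exp_atBot.comp hre
    · have he : ∀ n, Complex.exp (z n ^ 2) = Complex.exp (w n) := fun n => by rw [hsq n]
      simp only [he]
      exact hsec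
  · obtain ⟨z, hsq, hzabs, hre⟩ := key_pos hd w hw0 habs harg
    refine ⟨z, hzabs, ?_⟩
    simp only [hf]
    refine Tendsto.prodMk_nhds ?_ ?_
    · apply tendsto_onePoint_infty
      have he : ∀ n, ‖Complex.exp (a * z n)‖ = Real.exp ((a * z n).re) := by
        intro n; rw [Complex.norm_exp]
      simp only [he]
      exact Real.tendsto_exp_atTop.comp hre
    · have he : ∀ n, Complex.exp (z n ^ 2) = Complex.exp (w n) := fun n => by rw [hsq n]
      simp only [he]
      exact hsec
end

section
/- Let a, c ∈ ℂ with a ≠ 0 and c ≠ 0. Then there exists a sequence (zₙ) in ℂ such that |zₙ| → ∞, exp(zₙ²) = c for every n, and |exp(a·zₙ)| → ∞. -/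
open Filter Complex

private lemma abs_le_abs_add_of_mul_nonneg (x y : ℝ) (h : 0 ≤ x * y) : |x| ≤ |x + y| := by
  rcases le_or_gt 0 x with hx | hx <;> rcases le_or_gt 0 y with hy | hy
  · rw [_root_.abs_of_nonneg hx, _root_.abs_of_nonneg (by linarith)]; linarith
  · have hx0 : x = 0 := le_antisymm (by nlinarith) hx
    simp [hx0]
  · have hy0 : y = 0 := le_antisymm (by nlinarith) hy
    simp [hy0]
  · rw [_root_.abs_of_nonpos hx.le, _root_.abs_of_nonpos (by linarith)]; linarith

private lemma sqrt_tendsto_atTop : Tendsto Real.sqrt atTop atTop := by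
  refine tendsto_atTop_atTop.2 fun b => ⟨b ^ 2, fun n hn => ?_⟩
  calc b ≤ |b| := le_abs_self b
    _ = Real.sqrt (b ^ 2) := (Real.sqrt_sq_eq_abs b).symm
    _ ≤ Real.sqrt n := Real.sqrt_le_sqrt hn

/-- For `a c : ℂ` with `a ≠ 0`, `c ≠ 0`, there is a sequence `zₙ` with
`|zₙ| → ∞`, `exp (zₙ²) = c` for all `n`, and `|exp (a zₙ)| → ∞`. -/
theorem exists_seq_exp_sq_eq_and_exp_mul_tendsto_infty (a c : ℂ) (ha : a ≠ 0) (hc : c ≠ 0) :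
    ∃ z : ℕ → ℂ,
      Tendsto (fun n => ‖z n‖) atTop atTop ∧
      (∀ n, Complex.exp ((z n) ^ 2) = c) ∧
      Tendsto (fun n => ‖Complex.exp (a * z n)‖) atTop atTop := by
  have hπ : (3:ℝ) < Real.pi := Real.pi_gt_three
  set R : ℝ := (Complex.log c).re with hR
  set I : ℝ := (Complex.log c).im with hI
  set e : ℤ := if a.re * a.im ≤ 0 then 1 else -1 with he
  set ε : ℝ := (e : ℝ) with hε
  have hεsq : ε * ε = 1 := by
    by_cases h : a.re * a.im ≤ 0 <;> simp [hε, he, h]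
  have hεsq2 : ε ^ 2 = 1 := by rw [sq]; exact hεsq
  have hεabs : |ε| = 1 := by
    by_cases h : a.re * a.im ≤ 0 <;> simp [hε, he, h]
  set N : ℕ := ⌈|I| + |R| + 1⌉₊ with hN
  have hNge : |I| + |R| + 1 ≤ (N : ℝ) := Nat.le_ceil _
  set t : ℕ → ℝ := fun n => I + ε * (2 * Real.pi * (n + N)) with ht
  have htlb : ∀ n, 2 * Real.pi * n + |R| + 1 ≤ ε * t n := by
    intro n
    have h1 : -|I| ≤ ε * I := by
      have : |ε * I| = |I| := by rw [abs_mul, hεabs, one_mul]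
      linarith [neg_abs_le (ε * I)]
    have h2 : ε * t n = ε * I + 2 * Real.pi * (n + N) := by
      simp only [ht]
      linear_combination (2 * Real.pi * (n + N)) * hεsq2
    have h3 : (|I| + |R| + 1) ≤ 2 * Real.pi * N := by
      nlinarith [Nat.cast_nonneg (α := ℝ) N]
    have h4 : (0:ℝ) ≤ n := Nat.cast_nonneg n
    nlinarith
  have htabs : ∀ n, |t n| = ε * t n := by
    intro n
    have h0 : 0 ≤ ε * t n := le_trans (by positivity) (htlb n)
    have : |ε * t n| = |t n| := by rw [abs_mul, hεabs, one_mul]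
    rw [← this, _root_.abs_of_nonneg h0]
  set r : ℕ → ℝ := fun n => Real.sqrt (R ^ 2 + t n ^ 2) with hr
  have hrsq : ∀ n, r n ^ 2 = R ^ 2 + t n ^ 2 := fun n =>
    Real.sq_sqrt (by positivity)
  have hrt : ∀ n, |t n| ≤ r n := by
    intro n
    rw [← Real.sqrt_sq_eq_abs]
    exact Real.sqrt_le_sqrt (by nlinarith)
  have hrlb : ∀ n, 2 * Real.pi * n + |R| + 1 ≤ r n := fun n =>
    le_trans (le_trans (htlb n) (le_of_eq (htabs n).symm)) (hrt n)
  have hrp : ∀ n, 2 * Real.pi * n + 1 ≤ r n + R := by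
    intro n; have := hrlb n; have := neg_abs_le R; linarith
  have hrm : ∀ n, 2 * Real.pi * n + 1 ≤ r n - R := by
    intro n; have := hrlb n; have := le_abs_self R; linarith
  set p : ℕ → ℝ := fun n => Real.sqrt ((r n + R) / 2) with hp
  set q : ℕ → ℝ := fun n => Real.sqrt ((r n - R) / 2) with hq
  have hn1 : ∀ n : ℕ, (0:ℝ) ≤ 2 * Real.pi * n + 1 := by
    intro n; positivity
  have hpsq : ∀ n, p n ^ 2 = (r n + R) / 2 := fun n =>
    Real.sq_sqrt (by linarith [hrp n, hn1 n])
  have hqsq : ∀ n, q n ^ 2 = (r n - R) / 2 := fun n =>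
    Real.sq_sqrt (by linarith [hrm n, hn1 n])
  have hpq : ∀ n, 2 * (p n * q n) = |t n| := by
    intro n
    have h1 : p n * q n = Real.sqrt ((r n + R) / 2 * ((r n - R) / 2)) :=
      (Real.sqrt_mul (by linarith [hrp n, hn1 n]) _).symm
    have h2 : (r n + R) / 2 * ((r n - R) / 2) = t n ^ 2 / 4 := by
      linear_combination (hrsq n) / 4
    have h3 : Real.sqrt (t n ^ 2 / 4) = |t n| / 2 := by
      rw [show t n ^ 2 / 4 = (|t n| / 2) ^ 2 by rw [div_pow, _root_.sq_abs]; ring]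
      exact Real.sqrt_sq (by positivity)
    rw [h1, h2, h3]; ring
  set w : ℕ → ℂ := fun n => ⟨p n, ε * q n⟩ with hw
  have hw2 : ∀ n, (w n) ^ 2 = Complex.log c + (e * (n + N) : ℤ) * (2 * Real.pi * Complex.I) := by
    intro n
    refine Complex.ext ?_ ?_
    · simp only [hw, pow_two, Complex.mul_re, Complex.mul_im, Complex.add_re,
        Complex.intCast_re, Complex.intCast_im, Complex.I_re, Complex.I_im,
        Complex.ofReal_re, Complex.ofReal_im, Complex.re_ofNat, Complex.im_ofNat]
      rw [← hR]
      push_cast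
      linear_combination hpsq n - hqsq n - q n ^ 2 * hεsq2
    · have h5 : ε * (2 * (p n * q n)) = I + ε * (2 * Real.pi * (n + N)) := by
        rw [hpq n, htabs n]
        simp only [ht]
        linear_combination (I + ε * (2 * Real.pi * ((n : ℝ) + N))) * hεsq2
      simp only [hw, pow_two, Complex.mul_im, Complex.mul_re, Complex.add_im,
        Complex.intCast_re, Complex.intCast_im, Complex.I_re, Complex.I_im,
        Complex.ofReal_re, Complex.ofReal_im, Complex.re_ofNat, Complex.im_ofNat]
      rw [← hI]
      push_cast
      linear_combination h5
  set s : ℕ → ℝ := fun n => if 0 ≤ (a * w n).re then 1 else -1 with hs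
  have hssq : ∀ n, (s n) * (s n) = 1 := by
    intro n
    by_cases h : 0 ≤ (a * w n).re
    · simp only [hs]; rw [if_pos h]; norm_num
    · simp only [hs]; rw [if_neg h]; norm_num
  have hsabs : ∀ n, |s n| = 1 := by
    intro n
    by_cases h : 0 ≤ (a * w n).re
    · simp only [hs]; rw [if_pos h]; norm_num
    · simp only [hs]; rw [if_neg h]; norm_num
  refine ⟨fun n => (s n : ℂ) * w n, ?_, ?_, ?_⟩
  · -- |z n| → ∞
    have habsw : ∀ n, ‖(s n : ℂ) * w n‖ = Real.sqrt (r n) := by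
      intro n
      rw [norm_mul, Complex.norm_real, Real.norm_eq_abs, hsabs n, one_mul, Complex.norm_def,
        Complex.normSq_mk]
      congr 1
      have := hpsq n; have := hqsq n
      nlinarith [hεsq]
    simp only [habsw]
    have hinner : Tendsto (fun n : ℕ => 2 * Real.pi * (n : ℝ)) atTop atTop := by
      refine tendsto_atTop_atTop.2 fun b => ⟨⌈b⌉₊, fun n hn => ?_⟩
      have h1 : (⌈b⌉₊ : ℝ) ≤ n := Nat.cast_le.2 hn
      have hb := Nat.le_ceil b
      nlinarith [Nat.cast_nonneg (α := ℝ) n]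
    have hcomp : Tendsto (fun n : ℕ => Real.sqrt (2 * Real.pi * (n : ℝ))) atTop atTop :=
      sqrt_tendsto_atTop.comp hinner
    exact tendsto_atTop_mono
      (fun n => Real.sqrt_le_sqrt (by linarith [hrlb n, neg_abs_le R, abs_nonneg R])) hcomp
  · -- exp(z² ) = c
    intro n
    have : ((s n : ℂ) * w n) ^ 2 = (w n) ^ 2 := by
      rw [mul_pow, ← Complex.ofReal_pow, pow_two, hssq n]
      simp
    rw [this, hw2 n, Complex.exp_add, Complex.exp_int_mul_two_pi_mul_I,
      Complex.exp_log hc, mul_one]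
  · -- |exp(a z)| → ∞
    have hre : ∀ n, (a * ((s n : ℂ) * w n)).re = |(a * w n).re| := by
      intro n
      have h1 : a * ((s n : ℂ) * w n) = (s n : ℂ) * (a * w n) := by ring
      rw [h1, Complex.re_ofReal_mul]
      by_cases h : 0 ≤ (a * w n).re
      · rw [_root_.abs_of_nonneg h]; simp only [hs]; rw [if_pos h]; norm_num
      · rw [_root_.abs_of_neg (not_le.1 h)]; simp only [hs]; rw [if_neg h]; norm_num
    set M : ℝ := max |a.re| |a.im| with hM
    have hM0 : 0 < M := by
      have : a.re ≠ 0 ∨ a.im ≠ 0 := by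
        by_contra hcon
        push_neg at hcon
        exact ha (Complex.ext hcon.1 (by simpa using hcon.2))
      rcases this with h | h
      · exact lt_of_lt_of_le (_root_.abs_pos.2 h) (le_max_left _ _)
      · exact lt_of_lt_of_le (_root_.abs_pos.2 h) (le_max_right _ _)
    have hkey : ∀ n : ℕ, M * Real.sqrt ((2 * Real.pi * (n : ℝ) + 1) / 2) ≤ |(a * w n).re| := by
      intro n
      have hrew : (a * w n).re = a.re * p n + -(a.im * (ε * q n)) := by
        simp [Complex.mul_re, hw]; ring
      have hp0 : 0 ≤ p n := Real.sqrt_nonneg _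
      have hq0 : 0 ≤ q n := Real.sqrt_nonneg _
      have hsign : 0 ≤ (a.re * p n) * (-(a.im * (ε * q n))) := by
        have : (a.re * p n) * (-(a.im * (ε * q n))) = (-(a.re * a.im * ε)) * (p n * q n) := by
          ring
        rw [this]
        apply mul_nonneg _ (mul_nonneg hp0 hq0)
        by_cases h : a.re * a.im ≤ 0
        · have : ε = 1 := by simp [hε, he, h]
          rw [this]; linarith
        · have : ε = -1 := by simp [hε, he, h]
          rw [this]; push_neg at h; nlinarith
      have h1 : |a.re * p n| ≤ |(a * w n).re| := by
        rw [hrew]; exact abs_le_abs_add_of_mul_nonneg _ _ hsign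
      have h2 : |-(a.im * (ε * q n))| ≤ |(a * w n).re| := by
        rw [hrew, add_comm]
        exact abs_le_abs_add_of_mul_nonneg _ _ (by linarith [hsign, mul_comm (a.re * p n) (-(a.im * (ε * q n)))])
      have h1' : |a.re| * p n ≤ |(a * w n).re| := by
        rw [← _root_.abs_of_nonneg hp0, ← abs_mul]; exact h1
      have h2' : |a.im| * q n ≤ |(a * w n).re| := by
        have : |-(a.im * (ε * q n))| = |a.im| * q n := by
          rw [abs_neg, abs_mul, abs_mul, hεabs, one_mul, _root_.abs_of_nonneg hq0]
        rw [← this]; exact h2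
      have hplb : Real.sqrt ((2 * Real.pi * n + 1) / 2) ≤ p n :=
        Real.sqrt_le_sqrt (by linarith [hrp n])
      have hqlb : Real.sqrt ((2 * Real.pi * n + 1) / 2) ≤ q n :=
        Real.sqrt_le_sqrt (by linarith [hrm n])
      rcases max_cases |a.re| |a.im| with ⟨hMeq, _⟩ | ⟨hMeq, _⟩
      · calc M * Real.sqrt ((2 * Real.pi * n + 1) / 2) ≤ |a.re| * p n := by
              rw [hM, hMeq]; exact mul_le_mul_of_nonneg_left hplb (abs_nonneg _)
          _ ≤ _ := h1'
      · calc M * Real.sqrt ((2 * Real.pi * n + 1) / 2) ≤ |a.im| * q n := by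
              rw [hM, hMeq]; exact mul_le_mul_of_nonneg_left hqlb (abs_nonneg _)
          _ ≤ _ := h2'
    simp only [Complex.norm_exp, hre]
    have hinner2 : Tendsto (fun n : ℕ => (2 * Real.pi * (n : ℝ) + 1) / 2) atTop atTop := by
      refine tendsto_atTop_atTop.2 fun b => ⟨⌈b⌉₊, fun n hn => ?_⟩
      have h1 : (⌈b⌉₊ : ℝ) ≤ n := Nat.cast_le.2 hn
      have hb := Nat.le_ceil b
      nlinarith [Nat.cast_nonneg (α := ℝ) n]
    have hcomp2 : Tendsto (fun n : ℕ => Real.sqrt ((2 * Real.pi * (n : ℝ) + 1) / 2)) atTop atTop :=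
      sqrt_tendsto_atTop.comp hinner2
    have hmul : Tendsto (fun n : ℕ => M * Real.sqrt ((2 * Real.pi * (n : ℝ) + 1) / 2)) atTop atTop :=
      (tendsto_const_mul_atTop_of_pos hM0).2 hcomp2
    have hexp : Tendsto (fun n : ℕ => Real.exp (M * Real.sqrt ((2 * Real.pi * (n : ℝ) + 1) / 2)))
        atTop atTop := Real.tendsto_exp_atTop.comp hmul
    exact tendsto_atTop_mono (fun n => Real.exp_le_exp.2 (hkey n)) hexp
end

section
/- Let a, c ∈ ℂ with a ≠ 0 and c ≠ 0. Then there exists a sequence (zₙ) in ℂ such that |zₙ| → ∞, exp(zₙ²) = c for every n, and exp(a·zₙ) → 0. -/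
open Filter Complex

/-- For `a c : ℂ` with `a ≠ 0`, `c ≠ 0`, there is a sequence `zₙ` with
`|zₙ| → ∞`, `exp (zₙ²) = c` for all `n`, and `exp (a zₙ) → 0`. -/
theorem exists_seq_exp_sq_eq_and_exp_mul_tendsto_zero (a c : ℂ) (ha : a ≠ 0) (hc : c ≠ 0) :
    ∃ z : ℕ → ℂ,
      Tendsto (fun n => ‖z n‖) atTop atTop ∧
      (∀ n, Complex.exp ((z n) ^ 2) = c) ∧
      Tendsto (fun n => Complex.exp (a * z n)) atTop (nhds 0) := by
  set u : ℝ := (Complex.log c).re with hu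
  set v : ℝ := (Complex.log c).im with hv
  -- direction of the integer sequence
  set eZ : ℤ := if a.re = a.im then -1 else 1 with heZ
  set e : ℝ := (eZ : ℝ) with he
  have he2 : e ^ 2 = 1 := by
    rcases ite_eq_or_eq (a.re = a.im) (-1 : ℤ) 1 with h | h <;>
      simp [he, heZ] at * <;> simp_all <;> norm_num
  have he1 : e = 1 ∨ e = -1 := by
    rcases ite_eq_or_eq (a.re = a.im) (-1 : ℤ) 1 with h | h <;>
      rw [he, heZ] at * <;> rw [h] <;> norm_num
  -- the slope
  set α : ℝ := e * a.re - a.im with hα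
  have hαne : α ≠ 0 := by
    by_cases hre : a.re = a.im
    · have h1 : eZ = -1 := by simp [heZ, hre]
      have hane : a.re ≠ 0 := by
        intro h0
        apply ha
        apply Complex.ext <;> simp [h0, ← hre]
      rw [hα, he, h1]
      push_cast
      rw [← hre]
      intro h; apply hane; linarith
    · have h1 : eZ = 1 := by simp [heZ, hre]
      rw [hα, he, h1]
      push_cast
      intro h; apply hre; linarith
  -- sign
  set ε : ℝ := if 0 < α then -1 else 1 with hε
  have hε2 : ε ^ 2 = 1 := by
    by_cases h : 0 < α <;> simp [hε, h]
  have hεα : ε * α < 0 := by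
    by_cases h : 0 < α
    · simp only [hε, if_pos h]; nlinarith
    · have : α < 0 := lt_of_le_of_ne (not_lt.1 h) hαne
      simp only [hε, if_neg h]; nlinarith
  have hπ := Real.pi_pos
  have hvle : |v| ≤ Real.pi := by
    rw [abs_le]
    exact ⟨le_of_lt (Complex.neg_pi_lt_log_im c), Complex.log_im_le_pi c⟩
  -- the imaginary parts sequence
  set p : ℕ → ℝ := fun n => (v + 2 * Real.pi * e * (n + 1)) / 2 with hp
  have hep : ∀ n : ℕ, Real.pi * n + Real.pi / 2 ≤ e * p n := by
    intro n
    have h1 : -Real.pi ≤ e * v := by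
      rcases he1 with h | h <;> rw [h] <;> cases abs_le.1 hvle <;> linarith
    have : e * p n = (e * v + 2 * Real.pi * (n + 1)) / 2 := by
      rcases he1 with h | h <;> rw [hp, h] <;> push_cast <;> ring
    rw [this]
    have hn : (0:ℝ) ≤ n := Nat.cast_nonneg n
    nlinarith
  have hppos : ∀ n : ℕ, 0 < e * p n := fun n =>
    lt_of_lt_of_le (by positivity) (hep n)
  set r : ℕ → ℝ := fun n => Real.sqrt (u ^ 2 + 4 * p n ^ 2) with hr
  have hr2 : ∀ n, r n ^ 2 = u ^ 2 + 4 * p n ^ 2 := fun n =>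
    Real.sq_sqrt (by positivity)
  have hrnn : ∀ n, 0 ≤ r n := fun n => Real.sqrt_nonneg _
  set A : ℕ → ℝ := fun n => (-u + r n) / 2 with hA
  have hApos : ∀ n, 0 < A n := by
    intro n
    have hpn : p n ≠ 0 := by
      intro h0
      have := hppos n; rw [h0] at this; simp at this
    have : u ^ 2 < r n ^ 2 := by rw [hr2]; nlinarith [lt_of_le_of_ne (sq_nonneg (p n)) (Ne.symm (pow_ne_zero 2 hpn))]
    have hlt : |u| < r n := by
      nlinarith [abs_nonneg u, hrnn n, _root_.sq_abs u]
    rw [hA]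
    cases abs_lt.1 hlt; linarith
  set t : ℕ → ℝ := fun n => Real.sqrt (A n) with ht
  have htpos : ∀ n, 0 < t n := fun n => Real.sqrt_pos.2 (hApos n)
  have ht2 : ∀ n, t n ^ 2 = A n := fun n => Real.sq_sqrt (hApos n).le
  set s : ℕ → ℝ := fun n => p n / t n with hs
  have hst : ∀ n, s n * t n = p n := fun n => div_mul_cancel₀ _ (htpos n).ne'
  -- key algebra : s² - t² = u
  have hkey : ∀ n, s n ^ 2 - t n ^ 2 = u := by
    intro n
    have hA2 : A n ^ 2 + u * A n = p n ^ 2 := by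
      have := hr2 n
      rw [hA]; nlinarith
    have hs2 : s n ^ 2 = p n ^ 2 / A n := by
      rw [hs]; rw [div_pow, ht2 n]
    rw [hs2, ht2]
    have hAne := (hApos n).ne'
    field_simp
    nlinarith [hApos n]
  -- the sequence
  set z : ℕ → ℂ := fun n => ((ε * s n : ℝ) : ℂ) + ((ε * t n : ℝ) : ℂ) * Complex.I with hz
  have hzre : ∀ n, (z n).re = ε * s n := by intro n; simp [hz]
  have hzim : ∀ n, (z n).im = ε * t n := by intro n; simp [hz]
  -- t tends to infinity
  have htt : Tendsto t atTop atTop := by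
    have hAt : Tendsto A atTop atTop := by
      apply tendsto_atTop_mono (f := fun n : ℕ => Real.pi * n + (Real.pi / 2 - u / 2))
      · intro n
        have h1 := hep n
        have h2 : 2 * |p n| ≤ r n := by
          have : Real.sqrt ((2 * |p n|) ^ 2) ≤ r n := by
            apply Real.sqrt_le_sqrt; rw [mul_pow, _root_.sq_abs]; nlinarith
          rwa [Real.sqrt_sq (by positivity)] at this
        have habs_e : |e| = 1 := by rcases he1 with h | h <;> rw [h] <;> norm_num
        have h3 : e * p n ≤ |p n| := by
          rw [← abs_of_pos (hppos n), abs_mul, habs_e, one_mul]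
        rw [hA]; linarith
      · apply tendsto_atTop_add_const_right
        exact (tendsto_natCast_atTop_atTop (R := ℝ)).const_mul_atTop hπ
    exact sqrt_tendsto_atTop.comp hAt
  refine ⟨z, ?_, ?_, ?_⟩
  · -- |z n| → ∞
    apply tendsto_atTop_mono (f := t) _ htt
    intro n
    calc t n = |(z n).im| := by
          rw [hzim]
          rw [abs_mul]
          have : |ε| = 1 := by by_cases h : 0 < α <;> simp [hε, h]
          rw [this, one_mul, abs_of_pos (htpos n)]
      _ ≤ ‖z n‖ := Complex.abs_im_le_norm _
  · -- exp (z n ^ 2) = c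
    intro n
    have hsq : (z n) ^ 2 = ((u : ℂ) + ((2 * p n : ℝ) : ℂ) * Complex.I) := by
      rw [sq]
      apply Complex.ext
      · rw [Complex.mul_re, hzre, hzim]
        simp only [Complex.add_re, Complex.ofReal_re, Complex.mul_re, Complex.I_re,
          Complex.ofReal_im, Complex.I_im, mul_zero, mul_one, zero_mul, sub_zero, add_zero]
        calc ε * s n * (ε * s n) - ε * t n * (ε * t n)
            = ε ^ 2 * (s n ^ 2 - t n ^ 2) := by ring
          _ = u := by rw [hε2, hkey n, one_mul]
      · rw [Complex.mul_im, hzre, hzim]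
        simp only [Complex.add_im, Complex.ofReal_im, Complex.mul_im, Complex.I_im,
          Complex.ofReal_re, Complex.I_re, mul_zero, mul_one, zero_mul, add_zero, zero_add]
        calc ε * s n * (ε * t n) + ε * t n * (ε * s n)
            = ε ^ 2 * (2 * (s n * t n)) := by ring
          _ = 2 * p n := by rw [hε2, hst n, one_mul]
    have hzsq : (z n) ^ 2 = Complex.log c + ((eZ * (n + 1) : ℤ) : ℂ) * (2 * Real.pi * Complex.I) := by
      rw [hsq]
      rw [← Complex.re_add_im (Complex.log c), ← hu, ← hv]
      have h2p : (2 * p n : ℝ) = v + 2 * Real.pi * e * (n + 1) := by rw [hp]; ring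
      rw [h2p, he]
      push_cast
      ring
    rw [hzsq, Complex.exp_add, Complex.exp_int_mul_two_pi_mul_I, mul_one,
      Complex.exp_log hc]
  · -- exp (a * z n) → 0
    rw [tendsto_zero_iff_norm_tendsto_zero]
    have hre : Tendsto (fun n => (a * z n).re) atTop atBot := by
      have heq : ∀ n, (a * z n).re
          = ε * a.re * (s n - e * t n) + (ε * α) * t n := by
        intro n
        rw [Complex.mul_re, hzre, hzim, hα]
        ring
      have h1 : Tendsto (fun n => ε * a.re * (s n - e * t n)) atTop (nhds 0) := by
        have hesp : ∀ n, 0 < e * s n := by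
          intro n
          have h := div_pos (hppos n) (htpos n)
          have hsn : e * s n = e * p n / t n := by simp only [hs]; ring
          rw [hsn]; exact h
        have hset : ∀ n, s n - e * t n = u * e / (e * s n + t n) := by
          intro n
          have hden : 0 < e * s n + t n := by linarith [hesp n, htpos n]
          rw [eq_div_iff hden.ne']
          linear_combination e * hkey n - (s n * t n) * he2
        have hdent : Tendsto (fun n => e * s n + t n) atTop atTop := by
          apply tendsto_atTop_mono (f := t) _ htt
          intro n
          linarith [hesp n]
        have : Tendsto (fun n => u * e / (e * s n + t n)) atTop (nhds 0) :=
          tendsto_const_nhds.div_atTop hdent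
        have h0 : Tendsto (fun n => s n - e * t n) atTop (nhds 0) := by
          rw [show (fun n => s n - e * t n)
              = (fun n => u * e / (e * s n + t n)) from funext hset]
          exact this
        have := h0.const_mul (ε * a.re)
        simpa [mul_assoc] using this
      have h2 : Tendsto (fun n => (ε * α) * t n) atTop atBot :=
        htt.const_mul_atTop_of_neg hεα
      rw [show (fun n => (a * z n).re)
          = (fun n => ε * a.re * (s n - e * t n) + (ε * α) * t n) from funext heq]
      refine tendsto_atBot_add_left_of_ge' atTop (1 : ℝ) ?_ h2
      filter_upwards [h1.eventually (eventually_le_nhds (by norm_num : (0:ℝ) < 1))]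
        with n hn using hn
    have : Tendsto (fun n => Real.exp ((a * z n).re)) atTop (nhds 0) :=
      Real.tendsto_exp_atBot.comp hre
    simpa [Complex.norm_exp] using this
end
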